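/- Let Σ = (X, Y, M(U), φ, h) be a linear control system that is exponentially stable with constants M, σ > 0 and robust with respect to the input with nondecreasing function b. Then for every T > (1/σ)·ln(M), every x ∈ X, every u ∈ M(U) and every t ≥ 0, ‖φ(t,x,u)‖_X ≤ M·exp(−(σ − T⁻¹·ln(M))·t)·‖x‖_X + sup_{0≤r<T}( M·e^{−σr}·b(T)/(1 − M·e^{−σT}) + b(r) ) · sup_{0≤s≤t}‖u(s)‖_U. In particular Σ is exponentially input-to-state stable. -/

import Mathlib

open Filter

noncomputable section

/-- A linear control system `Σ = (X, Y, M(U), φ, h)` in the sense of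
Karafyllis, "On the Relation of IOS-Gains and Asymptotic Gains For Linear Systems".
Inputs are functions `u : ℝ → U`; only values on `[0, ∞)` are relevant. -/
structure LinearControlSystem (X Y U : Type*)
    [NormedAddCommGroup X] [NormedSpace ℝ X]
    [NormedAddCommGroup Y] [NormedSpace ℝ Y]
    [NormedAddCommGroup U] [NormedSpace ℝ U] where
  /-- the set `M(U)` of admissible inputs -/
  inputs : Set (ℝ → U)
  /-- the transition map `φ` -/
  trans : ℝ → X → (ℝ → U) → X
  /-- the continuous linear output map `h : X → Y` -/
  out : X →L[ℝ] Y
  /-- `U ≠ {0}` -/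
  U_nontrivial : ∃ v : U, v ≠ 0
  /-- inputs are locally bounded -/
  loc_bdd : ∀ u ∈ inputs, ∀ T : ℝ, BddAbove ((fun s => ‖u s‖) '' Set.Icc 0 T)
  zero_mem : (0 : ℝ → U) ∈ inputs
  add_mem : ∀ u₁ ∈ inputs, ∀ u₂ ∈ inputs, u₁ + u₂ ∈ inputs
  smul_mem : ∀ u ∈ inputs, ∀ c : ℝ, c • u ∈ inputs
  concat_le_mem : ∀ u₁ ∈ inputs, ∀ u₂ ∈ inputs, ∀ τ > (0 : ℝ),
    (fun t => if t ≤ τ then u₁ t else u₂ (t - τ)) ∈ inputs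
  concat_lt_mem : ∀ u₁ ∈ inputs, ∀ u₂ ∈ inputs, ∀ τ > (0 : ℝ),
    (fun t => if t < τ then u₁ t else u₂ (t - τ)) ∈ inputs
  /-- closure under the shift operator `δ_τ` -/
  shift_mem : ∀ u ∈ inputs, ∀ τ > (0 : ℝ), (fun t => u (t + τ)) ∈ inputs
  exists_input_val : ∀ v : U, ∃ u ∈ inputs, u 0 = v
  /-- closure under `T`-periodic extension -/
  periodic_ext_mem : ∀ u ∈ inputs, ∀ T > (0 : ℝ),
    (fun t => u (t - T * ⌊t / T⌋)) ∈ inputs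
  identity : ∀ x : X, ∀ u ∈ inputs, trans 0 x u = x
  causality : ∀ t ≥ (0 : ℝ), ∀ x : X, ∀ u ∈ inputs, ∀ v ∈ inputs,
    (∀ s, 0 ≤ s → s ≤ t → u s = v s) → trans t x u = trans t x v
  semigroup : ∀ x : X, ∀ u ∈ inputs, ∀ τ t : ℝ, 0 ≤ τ → τ ≤ t →
    trans t x u = trans (t - τ) (trans τ x u) (fun s => u (s + τ))
  linearity : ∀ t ≥ (0 : ℝ), ∀ x₁ x₂ : X, ∀ u₁ ∈ inputs, ∀ u₂ ∈ inputs, ∀ a b : ℝ,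
    trans t (a • x₁ + b • x₂) (a • u₁ + b • u₂) = a • trans t x₁ u₁ + b • trans t x₂ u₂

namespace LinearControlSystem

variable {X Y U : Type*}
    [NormedAddCommGroup X] [NormedSpace ℝ X]
    [NormedAddCommGroup Y] [NormedSpace ℝ Y]
    [NormedAddCommGroup U] [NormedSpace ℝ U]

/-- `sup_{0 ≤ s ≤ t} ‖u(s)‖`. -/
def runSup (u : ℝ → U) (t : ℝ) : ℝ :=
  sSup ((fun s => ‖u s‖) '' Set.Icc 0 t)

/-- `sup_{s ≥ 0} ‖u(s)‖`. -/
def supNorm (u : ℝ → U) : ℝ :=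
  sSup ((fun s => ‖u s‖) '' Set.Ici 0)

/-- exponential stability with the specific constants `M, σ > 0` -/
def IsES (sys : LinearControlSystem X Y U) (M σ : ℝ) : Prop :=
  0 < M ∧ 0 < σ ∧ ∀ x : X, ∀ t ≥ (0 : ℝ),
    ‖sys.trans t x 0‖ ≤ M * Real.exp (-σ * t) * ‖x‖

/-- exponential stability (ES) -/
def ES (sys : LinearControlSystem X Y U) : Prop :=
  ∃ M σ : ℝ, sys.IsES M σ

/-- robustness with respect to the input, with the specific nondecreasing function `b` -/
def IsRobust (sys : LinearControlSystem X Y U) (b : ℝ → ℝ) : Prop :=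
  MonotoneOn b (Set.Ici 0) ∧ (∀ t, 0 ≤ b t) ∧
    ∀ u ∈ sys.inputs, ∀ t ≥ (0 : ℝ), ‖sys.trans t 0 u‖ ≤ b t * runSup u t

/-- robustness with respect to the input -/
def Robust (sys : LinearControlSystem X Y U) : Prop :=
  ∃ b : ℝ → ℝ, sys.IsRobust b

/-- strict causality -/
def StrictlyCausal (sys : LinearControlSystem X Y U) : Prop :=
  ∀ t > (0 : ℝ), ∀ u ∈ sys.inputs, ∀ v ∈ sys.inputs,
    (∀ s, 0 ≤ s → s < t → u s = v s) → sys.trans t 0 u = sys.trans t 0 v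

/-- the minimum IOS-gain `γ` -/
def gain (sys : LinearControlSystem X Y U) : ℝ :=
  sSup {r | ∃ t ≥ (0 : ℝ), ∃ u ∈ sys.inputs, runSup u t = 1 ∧ r = ‖sys.out (sys.trans t 0 u)‖}

/-- the minimum output asymptotic gain `γ_as` -/
def asympGain (sys : LinearControlSystem X Y U) : ℝ :=
  sSup {r | ∃ u ∈ sys.inputs, supNorm u = 1 ∧
    r = limsup (fun t => ‖sys.out (sys.trans t 0 u)‖) atTop}

/-- the value `V(T)` of the optimal control problem (4.5) -/
def V (sys : LinearControlSystem X Y U) (T : ℝ) : ℝ :=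
  sSup {r | ∃ u ∈ sys.inputs, runSup u T = 1 ∧ r = ‖sys.out (sys.trans T 0 u)‖}

/-- periodic inputs -/
def Periodic (u : ℝ → U) : Prop :=
  ∃ T > (0 : ℝ), ∀ t ≥ (0 : ℝ), u (t + T) = u t

end LinearControlSystem

section Aux

open LinearControlSystem

variable {X Y U : Type*}
    [NormedAddCommGroup X] [NormedSpace ℝ X]
    [NormedAddCommGroup Y] [NormedSpace ℝ Y]
    [NormedAddCommGroup U] [NormedSpace ℝ U]
    (sys : LinearControlSystem X Y U)

lemma aux_runSup_nonneg (u : ℝ → U) (hu : u ∈ sys.inputs) {t : ℝ} (ht : 0 ≤ t) :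
    0 ≤ runSup u t :=
  le_trans (norm_nonneg (u 0)) (le_csSup (sys.loc_bdd u hu t) ⟨0, ⟨le_refl 0, ht⟩, rfl⟩)

lemma aux_runSup_mono (u : ℝ → U) (hu : u ∈ sys.inputs) {s t : ℝ} (hs : 0 ≤ s) (hst : s ≤ t) :
    runSup u s ≤ runSup u t :=
  csSup_le_csSup (sys.loc_bdd u hu t) ⟨‖u 0‖, 0, ⟨le_refl 0, hs⟩, rfl⟩
    (Set.image_mono (Set.Icc_subset_Icc_right hst))

lemma aux_shift_mem (u : ℝ → U) (hu : u ∈ sys.inputs) {τ : ℝ} (hτ : 0 ≤ τ) :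
    (fun s => u (s + τ)) ∈ sys.inputs := by
  rcases hτ.eq_or_lt with h | h
  · simpa [← h] using hu
  · exact sys.shift_mem u hu τ h

lemma aux_trans_add (t : ℝ) (ht : 0 ≤ t) (x : X) (u : ℝ → U) (hu : u ∈ sys.inputs) :
    sys.trans t x u = sys.trans t x 0 + sys.trans t 0 u := by
  have h := sys.linearity t ht x 0 0 sys.zero_mem u hu 1 1
  simpa using h

lemma aux_runSup_shift (u : ℝ → U) (hu : u ∈ sys.inputs) {τ T' : ℝ} (hτ : 0 ≤ τ)
    (hT' : 0 ≤ T') :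
    runSup (fun s => u (s + τ)) T' ≤ runSup u (τ + T') := by
  apply csSup_le_csSup (sys.loc_bdd u hu (τ + T'))
  · exact ⟨‖u (0 + τ)‖, 0, ⟨le_refl 0, hT'⟩, rfl⟩
  · rintro y ⟨s, ⟨hs0, hsT⟩, rfl⟩
    exact ⟨s + τ, ⟨by linarith, by linarith⟩, rfl⟩

lemma aux_step (M σ : ℝ) (b : ℝ → ℝ) (hES : sys.IsES M σ) (hrob : sys.IsRobust b)
    (u : ℝ → U) (hu : u ∈ sys.inputs) {τ T' : ℝ} (hτ : 0 ≤ τ) (hT' : 0 ≤ T') :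
    ‖sys.trans (τ + T') 0 u‖ ≤
      M * Real.exp (-σ * T') * ‖sys.trans τ 0 u‖ + b T' * runSup u (τ + T') := by
  have hu' : (fun s => u (s + τ)) ∈ sys.inputs := aux_shift_mem sys u hu hτ
  have hsem := sys.semigroup 0 u hu τ (τ + T') hτ (by linarith)
  rw [show τ + T' - τ = T' by ring] at hsem
  rw [hsem, aux_trans_add sys T' hT' _ _ hu']
  have h1 := norm_add_le (sys.trans T' (sys.trans τ 0 u) 0)
    (sys.trans T' 0 (fun s => u (s + τ)))
  have h2 := hES.2.2 (sys.trans τ 0 u) T' hT'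
  have h3 := hrob.2.2 _ hu' T' hT'
  have h4 : b T' * runSup (fun s => u (s + τ)) T' ≤ b T' * runSup u (τ + T') :=
    mul_le_mul_of_nonneg_left (aux_runSup_shift sys u hu hτ hT') (hrob.2.1 T')
  linarith

lemma aux_iter (M σ : ℝ) (b : ℝ → ℝ) (hES : sys.IsES M σ) (hrob : sys.IsRobust b)
    (u : ℝ → U) (hu : u ∈ sys.inputs) {T t : ℝ} (hT : 0 < T) (ht : 0 ≤ t)
    (hq : M * Real.exp (-σ * T) < 1) :
    ∀ n : ℕ, (n : ℝ) * T ≤ t →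
      ‖sys.trans ((n : ℝ) * T) 0 u‖ ≤ b T * runSup u t / (1 - M * Real.exp (-σ * T)) := by
  have h1q : 0 < 1 - M * Real.exp (-σ * T) := by linarith
  have hS := aux_runSup_nonneg sys u hu ht
  intro n
  induction n with
  | zero =>
    intro _
    rw [Nat.cast_zero, zero_mul, sys.identity 0 u hu, norm_zero]
    exact div_nonneg (mul_nonneg (hrob.2.1 T) hS) h1q.le
  | succ n ih =>
    intro hn1
    have hcast : ((n + 1 : ℕ) : ℝ) * T = (n : ℝ) * T + T := by push_cast; ring
    rw [hcast] at hn1 ⊢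
    have h0 : (0 : ℝ) ≤ (n : ℝ) * T := mul_nonneg n.cast_nonneg hT.le
    have hIH := ih (by linarith)
    have hstep := aux_step sys M σ b hES hrob u hu (τ := (n : ℝ) * T) (T' := T) h0 hT.le
    have hmono : runSup u ((n : ℝ) * T + T) ≤ runSup u t :=
      aux_runSup_mono sys u hu (by linarith) hn1
    have hq0 : 0 ≤ M * Real.exp (-σ * T) := mul_nonneg hES.1.le (Real.exp_pos _).le
    have h2 : M * Real.exp (-σ * T) * ‖sys.trans ((n : ℝ) * T) 0 u‖ ≤
        M * Real.exp (-σ * T) * (b T * runSup u t / (1 - M * Real.exp (-σ * T))) :=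
      mul_le_mul_of_nonneg_left hIH hq0
    have h3 : b T * runSup u ((n : ℝ) * T + T) ≤ b T * runSup u t :=
      mul_le_mul_of_nonneg_left hmono (hrob.2.1 T)
    have hAD : b T * runSup u t =
        (b T * runSup u t / (1 - M * Real.exp (-σ * T))) * (1 - M * Real.exp (-σ * T)) :=
      (div_mul_cancel₀ _ h1q.ne').symm
    have hkey : M * Real.exp (-σ * T) * (b T * runSup u t / (1 - M * Real.exp (-σ * T))) +
        b T * runSup u t = b T * runSup u t / (1 - M * Real.exp (-σ * T)) := by
      linear_combination hAD
    linarith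

lemma aux_bdd (M σ : ℝ) (b : ℝ → ℝ) (hM : 0 < M) (hσ : 0 < σ)
    (hbmono : MonotoneOn b (Set.Ici 0)) (hbnn : ∀ t, 0 ≤ b t) {T : ℝ} (hT0 : 0 < T)
    (h1q : 0 < 1 - M * Real.exp (-σ * T)) :
    BddAbove ((fun r => M * Real.exp (-σ * r) * b T / (1 - M * Real.exp (-σ * T)) + b r) ''
      Set.Ico 0 T) := by
  refine ⟨M * b T / (1 - M * Real.exp (-σ * T)) + b T, ?_⟩
  rintro y ⟨s, ⟨hs0, hsT⟩, rfl⟩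
  dsimp only
  have he1 : Real.exp (-σ * s) ≤ 1 := by
    rw [show (1 : ℝ) = Real.exp 0 from (Real.exp_zero).symm]
    exact Real.exp_le_exp.mpr (by nlinarith)
  have hbs : b s ≤ b T := hbmono (Set.mem_Ici.mpr hs0) (Set.mem_Ici.mpr hT0.le) hsT.le
  have hnum : M * Real.exp (-σ * s) * b T ≤ M * b T := by
    nlinarith [mul_nonneg (mul_nonneg hM.le (hbnn T)) (sub_nonneg.mpr he1)]
  have hdiv : M * Real.exp (-σ * s) * b T / (1 - M * Real.exp (-σ * T)) ≤
      M * b T / (1 - M * Real.exp (-σ * T)) := by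
    apply div_le_div_of_nonneg_right hnum h1q.le
  linarith

lemma aux_sSup_nonneg (M σ : ℝ) (b : ℝ → ℝ) (hM : 0 < M) (hσ : 0 < σ)
    (hbmono : MonotoneOn b (Set.Ici 0)) (hbnn : ∀ t, 0 ≤ b t) {T : ℝ} (hT0 : 0 < T)
    (h1q : 0 < 1 - M * Real.exp (-σ * T)) :
    0 ≤ sSup ((fun r => M * Real.exp (-σ * r) * b T / (1 - M * Real.exp (-σ * T)) + b r) ''
      Set.Ico 0 T) := by
  have hbdd := aux_bdd M σ b hM hσ hbmono hbnn hT0 h1q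
  exact le_trans (add_nonneg (div_nonneg (mul_nonneg (mul_nonneg hM.le
    (Real.exp_pos (-σ * 0)).le) (hbnn T)) h1q.le) (hbnn 0))
    (le_csSup hbdd ⟨0, ⟨le_refl 0, hT0⟩, rfl⟩)

end Aux

open LinearControlSystem in
/-- Theorem 4.1 (estimate (4.17)): an ES linear control system which is robust with respect
to the input satisfies the explicit ISS estimate for every `T > (1/σ)·ln M`; in particular
it is exponentially input-to-state stable. -/
theorem statement_0 {X Y U : Type*}
    [NormedAddCommGroup X] [NormedSpace ℝ X]
    [NormedAddCommGroup Y] [NormedSpace ℝ Y]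
    [NormedAddCommGroup U] [NormedSpace ℝ U]
    (sys : LinearControlSystem X Y U) (M σ : ℝ) (b : ℝ → ℝ)
    (hES : sys.IsES M σ) (hrob : sys.IsRobust b) :
    (∀ T : ℝ, T > (1 / σ) * Real.log M → ∀ x : X, ∀ u ∈ sys.inputs, ∀ t ≥ (0 : ℝ),
      ‖sys.trans t x u‖ ≤ M * Real.exp (-(σ - T⁻¹ * Real.log M) * t) * ‖x‖ +
        sSup ((fun r => M * Real.exp (-σ * r) * b T / (1 - M * Real.exp (-σ * T)) + b r) ''
            Set.Ico 0 T) * runSup u t) ∧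
    (∃ M' σ' g : ℝ, 0 < M' ∧ 0 < σ' ∧ 0 ≤ g ∧
      ∀ x : X, ∀ u ∈ sys.inputs, ∀ t ≥ (0 : ℝ),
        ‖sys.trans t x u‖ ≤ M' * Real.exp (-σ' * t) * ‖x‖ + g * runSup u t) := by
  obtain ⟨hM, hσ, hESb⟩ := hES
  obtain ⟨hbmono, hbnn, hrobb⟩ := hrob
  have hES' : sys.IsES M σ := ⟨hM, hσ, hESb⟩
  have hrob' : sys.IsRobust b := ⟨hbmono, hbnn, hrobb⟩
  have hM1 : ∀ z : X, z ≠ 0 → 1 ≤ M := by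
    intro z hz
    have h := hESb z 0 le_rfl
    rw [sys.identity z 0 sys.zero_mem] at h
    simp only [mul_zero, Real.exp_zero, mul_one] at h
    nlinarith [norm_pos_iff.mpr hz]
  have key : ∀ T : ℝ, T > (1 / σ) * Real.log M → ∀ x : X, ∀ u ∈ sys.inputs, ∀ t ≥ (0 : ℝ),
      ‖sys.trans t x u‖ ≤ M * Real.exp (-(σ - T⁻¹ * Real.log M) * t) * ‖x‖ +
        sSup ((fun r => M * Real.exp (-σ * r) * b T / (1 - M * Real.exp (-σ * T)) + b r) ''
            Set.Ico 0 T) * runSup u t := by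
    intro T hT x u hu t ht
    have hσT : Real.log M < σ * T := by
      have heq : (1 / σ) * Real.log M = Real.log M / σ := by ring
      have h' : Real.log M / σ < T := by linarith
      have := (div_lt_iff₀ hσ).mp h'
      linarith
    have hq : M * Real.exp (-σ * T) < 1 := by
      calc M * Real.exp (-σ * T) = Real.exp (Real.log M + -σ * T) := by
            rw [Real.exp_add, Real.exp_log hM]
        _ < Real.exp 0 := Real.exp_lt_exp.mpr (by linarith)
        _ = 1 := Real.exp_zero
    have h1q : 0 < 1 - M * Real.exp (-σ * T) := by linarith
    have hS := aux_runSup_nonneg sys u hu ht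
    by_cases htriv : ∀ z : X, z = 0
    · rw [htriv (sys.trans t x u), norm_zero]
      have h2 : 0 ≤ sSup ((fun r => M * Real.exp (-σ * r) * b T /
          (1 - M * Real.exp (-σ * T)) + b r) '' Set.Ico 0 T) := by
        rcases le_or_gt T 0 with hT0 | hT0
        · rw [Set.Ico_eq_empty (not_lt.mpr hT0), Set.image_empty, Real.sSup_empty]
        · exact aux_sSup_nonneg M σ b hM hσ hbmono hbnn hT0 h1q
      have h1 : 0 ≤ M * Real.exp (-(σ - T⁻¹ * Real.log M) * t) * ‖x‖ := by positivity
      nlinarith [mul_nonneg h2 hS]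
    · push_neg at htriv
      obtain ⟨x₀, hx₀⟩ := htriv
      have hlogM : 0 ≤ Real.log M := Real.log_nonneg (hM1 x₀ hx₀)
      have hT0 : 0 < T := by
        have h0 : 0 ≤ (1 / σ) * Real.log M := mul_nonneg (by positivity) hlogM
        linarith
      set n : ℕ := ⌊t / T⌋₊ with hn
      have hnle : (n : ℝ) * T ≤ t := by
        have h1 := Nat.floor_le (div_nonneg ht hT0.le)
        have h2 : (n : ℝ) * T ≤ (t / T) * T := by
          apply mul_le_mul_of_nonneg_right _ hT0.le
          exact_mod_cast h1
        rwa [div_mul_cancel₀ t hT0.ne'] at h2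
      have hlt : t < ((n : ℝ) + 1) * T := by
        have h1 := Nat.lt_floor_add_one (t / T)
        have h2 : (t / T) * T < ((n : ℝ) + 1) * T := by
          apply mul_lt_mul_of_pos_right _ hT0
          exact_mod_cast h1
        rwa [div_mul_cancel₀ t hT0.ne'] at h2
      set r := t - (n : ℝ) * T with hr
      have hr0 : 0 ≤ r := by rw [hr]; linarith
      have hrT : r < T := by rw [hr]; nlinarith
      have h0n : (0 : ℝ) ≤ (n : ℝ) * T := mul_nonneg n.cast_nonneg hT0.le
      have hstep := aux_step sys M σ b hES' hrob' u hu (τ := (n : ℝ) * T) (T' := r) h0n hr0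
      rw [show (n : ℝ) * T + r = t by rw [hr]; ring] at hstep
      have hiter := aux_iter sys M σ b hES' hrob' u hu hT0 ht hq n hnle
      have hfr : ‖sys.trans t 0 u‖ ≤
          (M * Real.exp (-σ * r) * b T / (1 - M * Real.exp (-σ * T)) + b r) * runSup u t := by
        have h2 : M * Real.exp (-σ * r) * ‖sys.trans ((n : ℝ) * T) 0 u‖ ≤
            M * Real.exp (-σ * r) * (b T * runSup u t / (1 - M * Real.exp (-σ * T))) :=
          mul_le_mul_of_nonneg_left hiter (by positivity)
        have h3 : M * Real.exp (-σ * r) * (b T * runSup u t / (1 - M * Real.exp (-σ * T))) +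
            b r * runSup u t =
            (M * Real.exp (-σ * r) * b T / (1 - M * Real.exp (-σ * T)) + b r) * runSup u t := by
          ring
        linarith
      have hbdd := aux_bdd M σ b hM hσ hbmono hbnn hT0 h1q
      have hmem : M * Real.exp (-σ * r) * b T / (1 - M * Real.exp (-σ * T)) + b r ≤
          sSup ((fun r => M * Real.exp (-σ * r) * b T / (1 - M * Real.exp (-σ * T)) + b r) ''
            Set.Ico 0 T) :=
        le_csSup hbdd ⟨r, ⟨hr0, hrT⟩, rfl⟩
      have hdec := aux_trans_add sys t ht x u hu
      have hfinal2 : ‖sys.trans t 0 u‖ ≤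
          sSup ((fun r => M * Real.exp (-σ * r) * b T / (1 - M * Real.exp (-σ * T)) + b r) ''
            Set.Ico 0 T) * runSup u t :=
        le_trans hfr (mul_le_mul_of_nonneg_right hmem hS)
      have hexp : Real.exp (-σ * t) ≤ Real.exp (-(σ - T⁻¹ * Real.log M) * t) := by
        apply Real.exp_le_exp.mpr
        nlinarith [mul_nonneg (mul_nonneg (inv_nonneg.mpr hT0.le) hlogM) ht]
      have hfinal1 : ‖sys.trans t x 0‖ ≤ M * Real.exp (-(σ - T⁻¹ * Real.log M) * t) * ‖x‖ := by
        refine le_trans (hESb x t ht) ?_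
        exact mul_le_mul_of_nonneg_right (mul_le_mul_of_nonneg_left hexp hM.le) (norm_nonneg x)
      calc ‖sys.trans t x u‖ ≤ ‖sys.trans t x 0‖ + ‖sys.trans t 0 u‖ := by
            rw [hdec]; exact norm_add_le _ _
        _ ≤ _ := add_le_add hfinal1 hfinal2
  refine ⟨key, ?_⟩
  by_cases htriv : ∀ z : X, z = 0
  · refine ⟨1, 1, 0, one_pos, one_pos, le_rfl, fun x u hu t ht => ?_⟩
    rw [htriv (sys.trans t x u), htriv x]
    simp
  · push_neg at htriv
    obtain ⟨x₀, hx₀⟩ := htriv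
    have hlogM : 0 ≤ Real.log M := Real.log_nonneg (hM1 x₀ hx₀)
    set T₀ : ℝ := Real.log M / σ + 1 with hT₀def
    have hT₀gt : T₀ > (1 / σ) * Real.log M := by
      have heq : (1 / σ) * Real.log M = Real.log M / σ := by ring
      rw [hT₀def, heq]; linarith
    have hT₀pos : 0 < T₀ := by
      have := div_nonneg hlogM hσ.le
      rw [hT₀def]; linarith
    have hσT₀ : Real.log M < σ * T₀ := by
      have : σ * T₀ = Real.log M + σ := by rw [hT₀def]; field_simp
      linarith
    have hq : M * Real.exp (-σ * T₀) < 1 := by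
      calc M * Real.exp (-σ * T₀) = Real.exp (Real.log M + -σ * T₀) := by
            rw [Real.exp_add, Real.exp_log hM]
        _ < Real.exp 0 := Real.exp_lt_exp.mpr (by linarith)
        _ = 1 := Real.exp_zero
    have h1q : 0 < 1 - M * Real.exp (-σ * T₀) := by linarith
    have hσ' : 0 < σ - T₀⁻¹ * Real.log M := by
      have h2 : T₀⁻¹ * Real.log M < σ := by
        rw [← div_eq_inv_mul]
        exact (div_lt_iff₀ hT₀pos).mpr (by linarith)
      linarith
    refine ⟨M, σ - T₀⁻¹ * Real.log M,
      sSup ((fun r => M * Real.exp (-σ * r) * b T₀ / (1 - M * Real.exp (-σ * T₀)) + b r) ''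
        Set.Ico 0 T₀), hM, hσ', aux_sSup_nonneg M σ b hM hσ hbmono hbnn hT₀pos h1q,
      fun x u hu t ht => key T₀ hT₀gt x u hu t ht⟩
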